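/- Fix functions lgcd : (ℕ → Option M) → M and red : (ℕ → Option M) → (ℕ → Option M) such that red Λ is nontrivial for every nontrivial Λ. Then conditions (a) and (b) hold if and only if all of the following hold for all nontrivial Γ, Λ : ℕ → Option M and all υ : M: (i) if lgcd Γ = lgcd Λ and red Γ = red Λ then Γ = Λ; (ii) lgcd (red Λ) = 1 and red (red Λ) = red Λ; (iii) lgcd (υ • Λ) = υ * lgcd Λ and red (υ • Λ) = red Λ. -/

import Mathlib

/-- `Λ : ℕ → Option M` is nontrivial if it is defined somewhere. -/
def NontrivialFn {M : Type} (Λ : ℕ → Option M) : Prop :=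
  Λ ≠ fun _ => none

/-- `υ • Λ`, multiplying each defined value of `Λ` by `υ` on the left. -/
def smulFn {M : Type} [Monoid M] (υ : M) (Λ : ℕ → Option M) : ℕ → Option M :=
  fun n => (Λ n).map (υ * ·)

/-- The functions `lgcd` and `red` satisfy conditions (a) and (b). -/
def SatisfiesLgcdRed (M : Type) [Monoid M] (lgcd : (ℕ → Option M) → M)
    (red : (ℕ → Option M) → (ℕ → Option M)) : Prop :=
  (∀ Λ, NontrivialFn Λ → NontrivialFn (red Λ)) ∧
  (∀ Λ, NontrivialFn Λ → Λ = smulFn (lgcd Λ) (red Λ)) ∧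
  (∀ Γ Λ, NontrivialFn Γ → NontrivialFn Λ → ∀ υ ν : M,
    smulFn υ (red Γ) = smulFn ν (red Λ) → υ = ν ∧ red Γ = red Λ)

lemma smulFn_one {M : Type} [Monoid M] (Λ : ℕ → Option M) : smulFn 1 Λ = Λ := by
  funext n
  simp [smulFn]

lemma smulFn_smulFn {M : Type} [Monoid M] (υ ν : M) (Λ : ℕ → Option M) :
    smulFn υ (smulFn ν Λ) = smulFn (υ * ν) Λ := by
  funext n
  simp [smulFn, Option.map_map, Function.comp, mul_assoc]

lemma nontrivial_smulFn {M : Type} [Monoid M] (υ : M) {Λ : ℕ → Option M}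
    (h : NontrivialFn Λ) : NontrivialFn (smulFn υ Λ) := by
  intro hc
  apply h
  funext n
  have := congrFun hc n
  simpa [smulFn, Option.map_eq_none_iff] using this



theorem lgcd_red_conditions_iff (M : Type) [Monoid M]
    (lgcd : (ℕ → Option M) → M) (red : (ℕ → Option M) → (ℕ → Option M))
    (hred : ∀ Λ, NontrivialFn Λ → NontrivialFn (red Λ)) :
    ((∀ Λ, NontrivialFn Λ → Λ = smulFn (lgcd Λ) (red Λ)) ∧
     (∀ Γ Λ, NontrivialFn Γ → NontrivialFn Λ → ∀ υ ν : M,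
       smulFn υ (red Γ) = smulFn ν (red Λ) → υ = ν ∧ red Γ = red Λ)) ↔
    ((∀ Γ Λ, NontrivialFn Γ → NontrivialFn Λ →
       lgcd Γ = lgcd Λ → red Γ = red Λ → Γ = Λ) ∧
     (∀ Λ, NontrivialFn Λ → lgcd (red Λ) = 1 ∧ red (red Λ) = red Λ) ∧
     (∀ Λ, NontrivialFn Λ → ∀ υ : M,
       lgcd (smulFn υ Λ) = υ * lgcd Λ ∧ red (smulFn υ Λ) = red Λ)) := by
  constructor
  · rintro ⟨ha, hb⟩
    have hii : ∀ Λ, NontrivialFn Λ → lgcd (red Λ) = 1 ∧ red (red Λ) = red Λ := by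
      intro Λ hΛ
      have hrΛ := hred Λ hΛ
      have h1 : smulFn (lgcd (red Λ)) (red (red Λ)) = smulFn 1 (red Λ) := by
        rw [smulFn_one]; exact (ha (red Λ) hrΛ).symm
      exact hb (red Λ) Λ hrΛ hΛ _ _ h1
    refine ⟨?_, hii, ?_⟩
    · intro Γ Λ hΓ hΛ hl hr
      rw [ha Γ hΓ, ha Λ hΛ, hl, hr]
    · intro Λ hΛ υ
      have hs : NontrivialFn (smulFn υ Λ) := nontrivial_smulFn υ hΛ
      have h1 : smulFn (lgcd (smulFn υ Λ)) (red (smulFn υ Λ))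
          = smulFn (υ * lgcd Λ) (red Λ) := by
        rw [← smulFn_smulFn, ← ha Λ hΛ]; exact (ha _ hs).symm
      exact hb (smulFn υ Λ) Λ hs hΛ _ _ h1
  · rintro ⟨hi, hii, hiii⟩
    constructor
    · intro Λ hΛ
      have hrΛ := hred Λ hΛ
      have hG : NontrivialFn (smulFn (lgcd Λ) (red Λ)) := nontrivial_smulFn _ hrΛ
      have h3 := hiii (red Λ) hrΛ (lgcd Λ)
      have h2 := hii Λ hΛ
      exact (hi _ Λ hG hΛ (by rw [h3.1, h2.1, mul_one]) (by rw [h3.2, h2.2])).symm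
    · intro Γ Λ hΓ hΛ υ ν h
      have hΓ3 := hiii (red Γ) (hred Γ hΓ) υ
      have hΛ3 := hiii (red Λ) (hred Λ hΛ) ν
      have hl : υ = ν := by
        have := congrArg lgcd h
        rw [hΓ3.1, hΛ3.1, (hii Γ hΓ).1, (hii Λ hΛ).1, mul_one, mul_one] at this
        exact this
      have hr : red Γ = red Λ := by
        have := congrArg red h
        rwa [hΓ3.2, hΛ3.2, (hii Γ hΓ).2, (hii Λ hΛ).2] at this
      exact ⟨hl, hr⟩
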